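/- For a linear subspace W ⊆ R^n, κ_W equals the maximum over nonempty I ⊆ [n] and nonzero p ∈ π_I(W) of ‖L_I^W(p)‖_∞ / ‖p‖_1, where L_I^W(p) is the minimum-2-norm vector z ∈ W with z_I = p. -/

import Mathlib

set_option linter.unusedSectionVars false
set_option maxHeartbeats 1000000

open Finset

variable {ι : Type*} [Fintype ι] [DecidableEq ι]

/-- `y` conforms to `x` if `x i * y i > 0` whenever `y i ≠ 0`. -/
def Conforms (y x : ι → ℝ) : Prop := ∀ i, y i ≠ 0 → x i * y i > 0

/-- An elementary vector of `W`: a support-minimal nonzero vector of `W`. -/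
def IsElementary (W : Submodule ℝ (ι → ℝ)) (g : ι → ℝ) : Prop :=
  g ∈ W ∧ g ≠ 0 ∧
    ∀ h ∈ W, h ≠ 0 → {i | h i ≠ 0} ⊆ {i | g i ≠ 0} → {i | h i ≠ 0} = {i | g i ≠ 0}

/-- The fractional circuit imbalance measure `κ_W`. -/
noncomputable def kappa (W : Submodule ℝ (ι → ℝ)) : ℝ :=
  sSup ({1} ∪ {t : ℝ | ∃ g : ι → ℝ, IsElementary W g ∧
    ∃ i j, g i ≠ 0 ∧ g j ≠ 0 ∧ t = |g j| / |g i|})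

/-- An integer elementary vector, normalized so that the gcd of its entries is 1. -/
def IsIntElementary (W : Submodule ℝ (ι → ℝ)) (g : ι → ℤ) : Prop :=
  IsElementary W (fun i => (g i : ℝ)) ∧ Finset.univ.gcd (fun i => (g i).natAbs) = 1

/-- The max-circuit imbalance measure `κ̄_W`. -/
noncomputable def barKappa (W : Submodule ℝ (ι → ℝ)) : ℕ :=
  sSup {k : ℕ | ∃ g : ι → ℤ, IsIntElementary W g ∧
    k = Finset.univ.sup fun i => (g i).natAbs}

/-- The lcm-circuit imbalance measure `κ̇_W`: the least positive integer divisible by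
every entry of every normalized integer elementary vector. -/
noncomputable def dotKappa (W : Submodule ℝ (ι → ℝ)) : ℕ :=
  sInf {k : ℕ | 0 < k ∧ ∀ g : ι → ℤ, IsIntElementary W g → ∀ i, g i ≠ 0 → (g i).natAbs ∣ k}

/-- A rational linear subspace: one spanned by rational vectors. -/
def IsRationalSubspace (W : Submodule ℝ (ι → ℝ)) : Prop :=
  ∃ S : Set (ι → ℚ), W = Submodule.span ℝ ((fun v : ι → ℚ => fun i => ((v i : ℝ))) '' S)

/-- The orthogonal complement of `W` in `ℝ^ι` with the standard inner product. -/
def orthComp (W : Submodule ℝ (ι → ℝ)) : Submodule ℝ (ι → ℝ) where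
  carrier := {v | ∀ w ∈ W, ∑ i, v i * w i = 0}
  add_mem' := by
    intro a b ha hb w hw
    have := ha w hw
    have := hb w hw
    simp only [Set.mem_setOf_eq, Pi.add_apply, add_mul, Finset.sum_add_distrib, *]
    ring
  zero_mem' := by intro w hw; simp
  smul_mem' := by
    intro c a ha w hw
    have h := ha w hw
    simp only [Set.mem_setOf_eq, Pi.smul_apply, smul_eq_mul, mul_assoc, ← Finset.mul_sum, h,
      mul_zero]

open Classical in
noncomputable def sf (z : ι → ℝ) : Finset ι := Finset.univ.filter (fun i => z i ≠ 0)

lemma mem_sf {z : ι → ℝ} {i : ι} : i ∈ sf z ↔ z i ≠ 0 := by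
  classical
  simp [sf]

lemma sf_eq_iff {h g : ι → ℝ} : sf h = sf g ↔ {i | h i ≠ 0} = {i | g i ≠ 0} := by
  constructor
  · intro he
    ext i
    have := Finset.ext_iff.mp he i
    simpa [mem_sf] using this
  · intro he
    ext i
    have := Set.ext_iff.mp he i
    simpa [mem_sf] using this

lemma sf_subset_iff {h g : ι → ℝ} : sf h ⊆ sf g ↔ {i | h i ≠ 0} ⊆ {i | g i ≠ 0} := by
  constructor
  · intro hs i hi
    simpa [mem_sf] using hs (mem_sf.mpr hi)
  · intro hs i hi
    exact mem_sf.mpr (hs (mem_sf.mp hi))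

lemma sf_nonempty {z : ι → ℝ} (hz : z ≠ 0) : (sf z).Nonempty := by
  by_contra h
  apply hz
  funext i
  have : i ∉ sf z := fun hi => h ⟨i, hi⟩
  simpa [mem_sf, not_not] using this

lemma elementary_smul {W : Submodule ℝ (ι → ℝ)} {g : ι → ℝ} (hg : IsElementary W g)
    {c : ℝ} (hc : c ≠ 0) : IsElementary W (c • g) := by
  obtain ⟨hgW, hg0, hmin⟩ := hg
  have hsupp : {i | (c • g) i ≠ 0} = {i | g i ≠ 0} := by
    ext i; simp [Pi.smul_apply, smul_eq_mul, hc]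
  refine ⟨W.smul_mem c hgW, ?_, ?_⟩
  · intro h0
    apply hg0
    funext i
    have : c * g i = 0 := congrFun h0 i
    rcases mul_eq_zero.mp this with h | h
    · exact absurd h hc
    · exact h
  · intro h hW hh0 hsub
    rw [hsupp] at hsub ⊢
    exact hmin h hW hh0 hsub

lemma elementary_proportional {W : Submodule ℝ (ι → ℝ)} {g : ι → ℝ} (hg : IsElementary W g)
    {h : ι → ℝ} (hhW : h ∈ W) (hh0 : h ≠ 0) (hsub : {i | h i ≠ 0} ⊆ {i | g i ≠ 0}) :
    ∃ c : ℝ, c ≠ 0 ∧ h = c • g := by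
  obtain ⟨hgW, hg0, hmin⟩ := hg
  have hse : {i | h i ≠ 0} = {i | g i ≠ 0} := hmin h hhW hh0 hsub
  obtain ⟨i₀, hi₀⟩ := sf_nonempty hg0
  have hgi₀ : g i₀ ≠ 0 := mem_sf.mp hi₀
  have hhi₀ : h i₀ ≠ 0 := by
    have : i₀ ∈ {i | h i ≠ 0} := hse ▸ hgi₀
    exact this
  set c := h i₀ / g i₀ with hc
  have hc0 : c ≠ 0 := div_ne_zero hhi₀ hgi₀
  refine ⟨c, hc0, ?_⟩
  by_contra hne
  set d := h - c • g with hd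
  have hdW : d ∈ W := W.sub_mem hhW (W.smul_mem c hgW)
  have hd0 : d ≠ 0 := fun h0 => hne (by rw [sub_eq_zero] at h0; exact h0)
  have hdsub : {i | d i ≠ 0} ⊆ {i | g i ≠ 0} := by
    intro i hi
    simp only [hd, Pi.sub_apply, Pi.smul_apply, smul_eq_mul, Set.mem_setOf_eq] at hi
    by_contra hgi
    simp only [Set.mem_setOf_eq, not_not] at hgi
    have hhi : h i = 0 := by
      by_contra hhi
      exact absurd (hsub hhi) (by simp [hgi])
    apply hi
    simp [hhi, hgi]
  have := hmin d hdW hd0 hdsub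
  have hdi₀ : d i₀ ≠ 0 := by
    have : i₀ ∈ {i | d i ≠ 0} := this ▸ hgi₀
    exact this
  apply hdi₀
  simp [hd, hc, div_mul_cancel₀ _ hgi₀]

lemma conforms_trans {x y z : ι → ℝ} (h1 : Conforms z y) (h2 : Conforms y x) : Conforms z x := by
  intro i hi
  have hy := h1 i hi
  have hyi : y i ≠ 0 := fun h0 => by simp [h0] at hy
  have hx := h2 i hyi
  nlinarith [mul_pos hx hy, mul_self_pos.mpr hyi]

lemma conforms_sf_subset {x y : ι → ℝ} (h : Conforms y x) : sf y ⊆ sf x := by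
  intro i hi
  have := h i (mem_sf.mp hi)
  exact mem_sf.mpr (fun h0 => by simp [h0] at this)

lemma exists_elem_support_subset {W : Submodule ℝ (ι → ℝ)} {z : ι → ℝ}
    (hzW : z ∈ W) (hz0 : z ≠ 0) : ∃ h, IsElementary W h ∧ sf h ⊆ sf z := by
  classical
  set P : ℕ → Prop := fun k => ∃ h, h ∈ W ∧ h ≠ 0 ∧ sf h ⊆ sf z ∧ (sf h).card = k with hPdef
  have hne : {k | P k}.Nonempty := ⟨(sf z).card, z, hzW, hz0, subset_rfl, rfl⟩
  obtain ⟨h, hhW, hh0, hsub, hcard⟩ := Nat.sInf_mem hne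
  refine ⟨h, ⟨hhW, hh0, ?_⟩, hsub⟩
  intro h' hh'W hh'0 hsub'
  have hsfsub : sf h' ⊆ sf h := sf_subset_iff.mpr hsub'
  have hmem : P (sf h').card := ⟨h', hh'W, hh'0, hsfsub.trans hsub, rfl⟩
  have hge : (sf h).card ≤ (sf h').card := hcard ▸ Nat.sInf_le hmem
  have : sf h' = sf h := Finset.eq_of_subset_of_card_le hsfsub hge
  exact sf_eq_iff.mp this

lemma exists_conf_elem {W : Submodule ℝ (ι → ℝ)} :
    ∀ m : ℕ, ∀ z : ι → ℝ, z ∈ W → z ≠ 0 → (sf z).card ≤ m →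
    ∃ g, IsElementary W g ∧ Conforms g z := by
  intro m
  induction m with
  | zero =>
    intro z hzW hz0 hc
    obtain ⟨i, hi⟩ := sf_nonempty hz0
    have := Finset.card_pos.mpr ⟨i, hi⟩
    omega
  | succ m ih =>
    intro z hzW hz0 hc
    classical
    obtain ⟨h, hel, hsub⟩ := exists_elem_support_subset hzW hz0
    by_cases h1 : Conforms h z
    · exact ⟨h, hel, h1⟩
    by_cases h2 : Conforms (-h) z
    · refine ⟨-h, ?_, h2⟩
      have := elementary_smul hel (c := (-1 : ℝ)) (by norm_num)
      simpa using this
    rw [Conforms] at h1 h2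
    push_neg at h1 h2
    obtain ⟨i₁, hi₁ne, hi₁le⟩ := h1
    obtain ⟨i₂, hi₂ne, hi₂le⟩ := h2
    have hi₂ne' : h i₂ ≠ 0 := fun h0 => hi₂ne (by simp [h0])
    have hz₂ : z i₂ ≠ 0 := mem_sf.mp (hsub (mem_sf.mpr hi₂ne'))
    have hz₁ : z i₁ ≠ 0 := mem_sf.mp (hsub (mem_sf.mpr hi₁ne))
    have hi₂pos : z i₂ * h i₂ > 0 := by
      rcases lt_or_gt_of_ne (mul_ne_zero hz₂ hi₂ne') with hlt | hgt
      · exfalso; simp only [Pi.neg_apply, mul_neg] at hi₂le; linarith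
      · exact hgt
    have hi₁neg : z i₁ * h i₁ < 0 := lt_of_le_of_ne hi₁le (mul_ne_zero hz₁ hi₁ne)
    set P : Finset ι := (sf h).filter (fun i => z i * h i > 0) with hP
    have hi₂P : i₂ ∈ P := by simp [hP, mem_sf, hi₂ne', hi₂pos]
    obtain ⟨i₀, hi₀P, hi₀min⟩ := Finset.exists_min_image P (fun i => z i / h i) ⟨i₂, hi₂P⟩
    have hi₀h : h i₀ ≠ 0 := mem_sf.mp (Finset.mem_filter.mp hi₀P).1
    have hi₀pos : z i₀ * h i₀ > 0 := (Finset.mem_filter.mp hi₀P).2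
    set α := z i₀ / h i₀ with hα
    have hαpos : α > 0 := div_pos_iff.mpr (by rcases mul_pos_iff.mp hi₀pos with ⟨ha, hb⟩ | ⟨ha, hb⟩
                                              · exact Or.inl ⟨ha, hb⟩
                                              · exact Or.inr ⟨ha, hb⟩)
    set z' : ι → ℝ := z - α • h with hz'
    have hz'W : z' ∈ W := W.sub_mem hzW (W.smul_mem α hel.1)
    have key : ∀ i, i ∈ sf h → z i * z' i ≥ 0 ∧ (z' i ≠ 0 → z i * z' i > 0) := by
      intro i hi
      have hhi : h i ≠ 0 := mem_sf.mp hi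
      have hzi : z i ≠ 0 := mem_sf.mp (hsub hi)
      have hz'i : z' i = z i - α * h i := by simp [hz']
      by_cases hiP : i ∈ P
      · have hle : α ≤ z i / h i := hi₀min i hiP
        have hpos : z i * h i > 0 := (Finset.mem_filter.mp hiP).2
        have hmul : α * (z i * h i) ≤ (z i / h i) * (z i * h i) :=
          mul_le_mul_of_nonneg_right hle (le_of_lt hpos)
        have hid : (z i / h i) * (z i * h i) = z i * z i := by field_simp
        have hge : z i * z' i ≥ 0 := by rw [hz'i]; nlinarith
        refine ⟨hge, fun hne => lt_of_le_of_ne hge (Ne.symm (mul_ne_zero hzi hne))⟩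
      · have hneg : z i * h i ≤ 0 := by
          by_contra hgt
          exact hiP (Finset.mem_filter.mpr ⟨hi, by linarith⟩)
        have : z i * z' i > 0 := by rw [hz'i]; nlinarith [mul_self_pos.mpr hzi]
        exact ⟨le_of_lt this, fun _ => this⟩
    have hconf : Conforms z' z := by
      intro i hi
      by_cases hih : i ∈ sf h
      · exact (key i hih).2 hi
      · have hhi : h i = 0 := not_not.mp (fun hne => hih (mem_sf.mpr hne))
        have : z' i = z i := by simp [hz', hhi]
        rw [this] at hi ⊢
        exact mul_self_pos.mpr hi
    have hz'i₁ : z' i₁ ≠ 0 := by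
      have hz'e : z' i₁ = z i₁ - α * h i₁ := by simp [hz']
      intro h0
      have hze : z i₁ = α * h i₁ := by rw [h0] at hz'e; linarith
      have heq : z i₁ * h i₁ = α * (h i₁ * h i₁) := by rw [hze]; ring
      linarith [mul_pos hαpos (mul_self_pos.mpr hi₁ne)]
    have hz'0 : z' ≠ 0 := fun h0 => hz'i₁ (by rw [h0]; rfl)
    have hz'i₀ : z' i₀ = 0 := by
      have hdm : α * h i₀ = z i₀ := div_mul_cancel₀ _ hi₀h
      simp [hz', hdm]
    have hsubz : sf z' ⊆ sf z := conforms_sf_subset hconf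
    have hzi₀ : z i₀ ≠ 0 := mem_sf.mp (hsub (mem_sf.mpr hi₀h))
    have hss : sf z' ⊂ sf z := (Finset.ssubset_iff_of_subset hsubz).mpr
      ⟨i₀, mem_sf.mpr hzi₀, fun hm => (mem_sf.mp hm) hz'i₀⟩
    have hcard2 : (sf z').card ≤ m := by
      have := Finset.card_lt_card hss
      omega
    obtain ⟨g, hgel, hgconf⟩ := ih z' hz'W hz'0 hcard2
    exact ⟨g, hgel, conforms_trans hgconf hconf⟩

lemma conformal_decomp {W : Submodule ℝ (ι → ℝ)} :
    ∀ m : ℕ, ∀ z : ι → ℝ, z ∈ W → z ≠ 0 → (sf z).card ≤ m →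
    ∃ L : List (ι → ℝ), (∀ g ∈ L, IsElementary W g ∧ Conforms g z) ∧ z = L.sum := by
  intro m
  induction m with
  | zero =>
    intro z hzW hz0 hc
    obtain ⟨i, hi⟩ := sf_nonempty hz0
    have := Finset.card_pos.mpr ⟨i, hi⟩
    omega
  | succ m ih =>
    intro z hzW hz0 hc
    classical
    obtain ⟨g, hgel, hgconf⟩ := exists_conf_elem (m + 1) z hzW hz0 hc
    have hg0 : g ≠ 0 := hgel.2.1
    obtain ⟨j₀, hj₀⟩ := sf_nonempty hg0
    obtain ⟨i₀, hi₀mem, hi₀min⟩ := Finset.exists_min_image (sf g) (fun i => z i / g i) ⟨j₀, hj₀⟩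
    have hgi₀ : g i₀ ≠ 0 := mem_sf.mp hi₀mem
    have hpos₀ : z i₀ * g i₀ > 0 := hgconf i₀ hgi₀
    set β := z i₀ / g i₀ with hβ
    have hβpos : β > 0 := div_pos_iff.mpr (by rcases mul_pos_iff.mp hpos₀ with ⟨ha, hb⟩ | ⟨ha, hb⟩
                                              · exact Or.inl ⟨ha, hb⟩
                                              · exact Or.inr ⟨ha, hb⟩)
    set z' : ι → ℝ := z - β • g with hz'
    have hz'W : z' ∈ W := W.sub_mem hzW (W.smul_mem β hgel.1)
    have hβg : IsElementary W (β • g) := elementary_smul hgel (ne_of_gt hβpos)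
    have hβgconf : Conforms (β • g) z := by
      intro i hi
      have hgi : g i ≠ 0 := by
        intro h0; apply hi; simp [h0]
      have := hgconf i hgi
      have : z i * (β * g i) = β * (z i * g i) := by ring
      simp only [Pi.smul_apply, smul_eq_mul]
      rw [this]
      exact mul_pos hβpos (hgconf i hgi)
    have hconf : Conforms z' z := by
      intro i hi
      by_cases hig : i ∈ sf g
      · have hgi : g i ≠ 0 := mem_sf.mp hig
        have hpos : z i * g i > 0 := hgconf i hgi
        have hzi : z i ≠ 0 := fun h0 => by simp [h0] at hpos
        have hle : β ≤ z i / g i := hi₀min i hig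
        have hmul : β * (z i * g i) ≤ (z i / g i) * (z i * g i) :=
          mul_le_mul_of_nonneg_right hle (le_of_lt hpos)
        have hid : (z i / g i) * (z i * g i) = z i * z i := by field_simp
        have hz'i : z' i = z i - β * g i := by simp [hz']
        have hge : z i * z' i ≥ 0 := by rw [hz'i]; nlinarith
        exact lt_of_le_of_ne hge (Ne.symm (mul_ne_zero hzi hi))
      · have hgi : g i = 0 := not_not.mp (fun hne => hig (mem_sf.mpr hne))
        have hzz : z' i = z i := by simp [hz', hgi]
        rw [hzz] at hi ⊢
        exact mul_self_pos.mpr hi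
    by_cases hz'0 : z' = 0
    · refine ⟨[β • g], ?_, ?_⟩
      · intro g' hg'
        simp only [List.mem_singleton] at hg'
        subst hg'
        exact ⟨hβg, hβgconf⟩
      · have : z - β • g = 0 := hz' ▸ hz'0
        have := sub_eq_zero.mp this
        simp [this]
    · have hz'i₀ : z' i₀ = 0 := by
        have hdm : β * g i₀ = z i₀ := div_mul_cancel₀ _ hgi₀
        simp [hz', hdm]
      have hsubz : sf z' ⊆ sf z := conforms_sf_subset hconf
      have hzi₀ : z i₀ ≠ 0 := fun h0 => by simp [h0] at hpos₀
      have hss : sf z' ⊂ sf z := (Finset.ssubset_iff_of_subset hsubz).mpr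
        ⟨i₀, mem_sf.mpr hzi₀, fun hm => (mem_sf.mp hm) hz'i₀⟩
      have hcard2 : (sf z').card ≤ m := by
        have := Finset.card_lt_card hss
        omega
      obtain ⟨L', hL', hsum'⟩ := ih z' hz'W hz'0 hcard2
      refine ⟨(β • g) :: L', ?_, ?_⟩
      · intro g' hg'
        rcases List.mem_cons.mp hg' with h | h
        · subst h; exact ⟨hβg, hβgconf⟩
        · exact ⟨(hL' g' h).1, conforms_trans (hL' g' h).2 hconf⟩
      · rw [List.sum_cons, ← hsum']
        simp [hz']

lemma list_sum_apply (L : List (ι → ℝ)) (l : ι) : L.sum l = (L.map (fun g => g l)).sum := by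
  induction L with
  | nil => rfl
  | cons a t ih => simp [List.sum_cons, ih]

lemma list_abs_sum_nonneg (L : List ℝ) (h : ∀ x ∈ L, 0 ≤ x) : (L.map abs).sum = L.sum := by
  induction L with
  | nil => rfl
  | cons a t ih =>
    simp only [List.map_cons, List.sum_cons]
    rw [abs_of_nonneg (h a List.mem_cons_self), ih (fun x hx => h x (List.mem_cons_of_mem a hx))]

lemma list_abs_sum_nonpos (L : List ℝ) (h : ∀ x ∈ L, x ≤ 0) : (L.map abs).sum = -L.sum := by
  induction L with
  | nil => simp
  | cons a t ih =>
    simp only [List.map_cons, List.sum_cons]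
    rw [abs_of_nonpos (h a List.mem_cons_self), ih (fun x hx => h x (List.mem_cons_of_mem a hx))]
    ring

lemma abs_decomp {z : ι → ℝ} {L : List (ι → ℝ)} (hconf : ∀ g ∈ L, Conforms g z)
    (hsum : z = L.sum) (l : ι) : |z l| = (L.map (fun g => |g l|)).sum := by
  have hM : z l = (L.map (fun g => g l)).sum := by rw [hsum, list_sum_apply]
  have hmap : L.map (fun g => |g l|) = (L.map (fun g => g l)).map abs := by
    rw [List.map_map]; rfl
  rcases lt_trichotomy (z l) 0 with hneg | hzero | hpos
  · have hle : ∀ x ∈ L.map (fun g => g l), x ≤ 0 := by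
      intro x hx
      obtain ⟨g, hg, hgl⟩ := List.mem_map.mp hx
      by_contra hgt
      push_neg at hgt
      have := hconf g hg l (by rw [hgl]; exact ne_of_gt hgt)
      rw [hgl] at this
      nlinarith
    rw [hmap, list_abs_sum_nonpos _ hle, ← hM, abs_of_neg hneg]
  · have hall : ∀ x ∈ L.map (fun g => g l), x = 0 := by
      intro x hx
      obtain ⟨g, hg, hgl⟩ := List.mem_map.mp hx
      by_contra hne
      have := hconf g hg l (hgl ▸ hne)
      rw [hzero] at this
      simp at this
    rw [hmap, hzero, abs_zero]
    rw [List.sum_eq_zero]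
    intro x hx
    obtain ⟨y, hy, hyx⟩ := List.mem_map.mp hx
    rw [← hyx, hall y hy, abs_zero]
  · have hle : ∀ x ∈ L.map (fun g => g l), 0 ≤ x := by
      intro x hx
      obtain ⟨g, hg, hgl⟩ := List.mem_map.mp hx
      by_contra hgt
      push_neg at hgt
      have := hconf g hg l (by rw [hgl]; exact ne_of_lt hgt)
      rw [hgl] at this
      nlinarith
    rw [hmap, list_abs_sum_nonneg _ hle, ← hM, abs_of_pos hpos]

lemma kappa_set_bddAbove (W : Submodule ℝ (ι → ℝ)) :
    BddAbove ({1} ∪ {t : ℝ | ∃ g : ι → ℝ, IsElementary W g ∧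
      ∃ i j, g i ≠ 0 ∧ g j ≠ 0 ∧ t = |g j| / |g i|}) := by
  classical
  set rep : Finset ι → (ι → ℝ) := fun S =>
    if h : ∃ g, IsElementary W g ∧ sf g = S then h.choose else 0 with hrep
  set f : Finset ι × ι × ι → ℝ := fun p => |rep p.1 p.2.2| / |rep p.1 p.2.1| with hf
  have hfin : ({1} ∪ Set.range f).Finite := (Set.finite_singleton 1).union (Set.finite_range f)
  apply BddAbove.mono _ hfin.bddAbove
  apply Set.union_subset_union subset_rfl
  rintro t ⟨g, hgel, i, j, hgi, hgj, ht⟩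
  set S₀ := sf g with hS₀
  have hex : ∃ g', IsElementary W g' ∧ sf g' = S₀ := ⟨g, hgel, rfl⟩
  have hrepS : rep S₀ = hex.choose := by simp [hrep, hex]
  obtain ⟨hrel, hrsf⟩ := hex.choose_spec
  have hrsub : {l | hex.choose l ≠ 0} ⊆ {l | g l ≠ 0} := by
    rw [← sf_subset_iff, hrsf]
  obtain ⟨c, hc0, hcg⟩ := elementary_proportional hgel hrel.1 hrel.2.1 hrsub
  refine ⟨(S₀, i, j), ?_⟩
  simp only [hf, hrepS]
  rw [hcg]
  simp only [Pi.smul_apply, smul_eq_mul, abs_mul]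
  rw [mul_div_mul_left _ _ (abs_ne_zero.mpr hc0), ht]

lemma one_le_kappa (W : Submodule ℝ (ι → ℝ)) : 1 ≤ kappa W :=
  le_csSup (kappa_set_bddAbove W) (Or.inl rfl)

lemma ratio_le_kappa {W : Submodule ℝ (ι → ℝ)} {g : ι → ℝ} (hel : IsElementary W g)
    {i j : ι} (hi : g i ≠ 0) (hj : g j ≠ 0) : |g j| / |g i| ≤ kappa W :=
  le_csSup (kappa_set_bddAbove W) (Or.inr ⟨g, hel, i, j, hi, hj, rfl⟩)

lemma list_finset_sum_swap (L : List (ι → ℝ)) (I : Finset ι) (f : (ι → ℝ) → ι → ℝ) :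
    (L.map (fun g => ∑ i ∈ I, f g i)).sum = ∑ i ∈ I, (L.map (fun g => f g i)).sum := by
  induction L with
  | nil => simp
  | cons a t ih => simp [List.sum_cons, ih, Finset.sum_add_distrib]

/-- `κ_W` equals the maximum over nonempty `I` and nonzero `p ∈ π_I(W)` of
`‖L_I^W(p)‖_∞ / ‖p‖_1`, where `L_I^W(p)` is the minimum-2-norm vector `z ∈ W` with
`z_I = p`. -/
theorem kappa_eq_lifting {n : ℕ} (W : Submodule ℝ (Fin n → ℝ)) (hW : W ≠ ⊥) :
    kappa W = sSup {t : ℝ | ∃ I : Finset (Fin n), I.Nonempty ∧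
      ∃ z : Fin n → ℝ, z ∈ W ∧ (∃ i ∈ I, z i ≠ 0) ∧
        (∀ z' : Fin n → ℝ, z' ∈ W → (∀ i ∈ I, z' i = z i) →
          ∑ l, z l ^ 2 ≤ ∑ l, z' l ^ 2) ∧
        t = (⨆ l, |z l|) / ∑ i ∈ I, |z i|} := by
  classical
  set T := {t : ℝ | ∃ I : Finset (Fin n), I.Nonempty ∧
      ∃ z : Fin n → ℝ, z ∈ W ∧ (∃ i ∈ I, z i ≠ 0) ∧
        (∀ z' : Fin n → ℝ, z' ∈ W → (∀ i ∈ I, z' i = z i) →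
          ∑ l, z l ^ 2 ≤ ∑ l, z' l ^ 2) ∧
        t = (⨆ l, |z l|) / ∑ i ∈ I, |z i|} with hT
  have hκ0 : (0:ℝ) ≤ kappa W := le_trans zero_le_one (one_le_kappa W)
  have hub : ∀ t ∈ T, t ≤ kappa W := by
    rintro t ⟨I, hIne, z, hzW, ⟨i₀, hi₀I, hzi₀⟩, hmin, ht⟩
    have hz0 : z ≠ 0 := fun h0 => hzi₀ (by rw [h0]; rfl)
    obtain ⟨L, hL, hsum⟩ := conformal_decomp (sf z).card z hzW hz0 le_rfl
    have hmeet : ∀ g ∈ L, ∃ i ∈ I, g i ≠ 0 := by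
      intro g hg
      by_contra hno
      push_neg at hno
      obtain ⟨hel, hconf⟩ := hL g hg
      have hg0 : g ≠ 0 := hel.2.1
      obtain ⟨l₀, hl₀⟩ := sf_nonempty hg0
      have hl₀g : g l₀ ≠ 0 := mem_sf.mp hl₀
      set c := ∑ l, z l * g l with hc
      set d := ∑ l, g l * g l with hd
      have hcpos : 0 < c := by
        apply Finset.sum_pos'
        · intro l _
          by_cases h0 : g l = 0
          · simp [h0]
          · exact le_of_lt (hconf l h0)
        · exact ⟨l₀, Finset.mem_univ _, hconf l₀ hl₀g⟩
      have hdpos : 0 < d := by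
        apply Finset.sum_pos'
        · intro l _; exact mul_self_nonneg _
        · exact ⟨l₀, Finset.mem_univ _, mul_self_pos.mpr hl₀g⟩
      set ε := c / d with hε
      have hz''W : z - ε • g ∈ W := W.sub_mem hzW (W.smul_mem ε hel.1)
      have hagree : ∀ i ∈ I, (z - ε • g) i = z i := by
        intro i hiI; simp [hno i hiI]
      have hminle := hmin (z - ε • g) hz''W hagree
      have hexp : ∑ l, (z - ε • g) l ^ 2 = ∑ l, z l ^ 2 - 2 * ε * c + ε ^ 2 * d := by
        have hterm : ∀ l, (z - ε • g) l ^ 2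
            = z l ^ 2 - 2 * ε * (z l * g l) + ε ^ 2 * (g l * g l) := by
          intro l
          simp only [Pi.sub_apply, Pi.smul_apply, smul_eq_mul]
          ring
        rw [Finset.sum_congr rfl (fun l _ => hterm l), Finset.sum_add_distrib,
          Finset.sum_sub_distrib, ← Finset.mul_sum, ← Finset.mul_sum, ← hc, ← hd]
      have h1 : 2 * (c/d) * c - (c/d)^2 * d = c^2 / d := by field_simp; ring
      have h2 : 0 < c^2/d := div_pos (by positivity) hdpos
      rw [hexp] at hminle
      rw [hε] at hminle
      linarith
    set D := ∑ i ∈ I, |z i| with hD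
    have hDpos : 0 < D := lt_of_lt_of_le (abs_pos.mpr hzi₀)
      (Finset.single_le_sum (fun i _ => abs_nonneg (z i)) hi₀I)
    have hcoord : ∀ l, |z l| ≤ kappa W * D := by
      intro l
      rw [abs_decomp (fun g hg => (hL g hg).2) hsum l]
      have hstep : ∀ g ∈ L, |g l| ≤ kappa W * ∑ i ∈ I, |g i| := by
        intro g hg
        obtain ⟨ig, higI, hgig⟩ := hmeet g hg
        by_cases h0 : g l = 0
        · rw [h0, abs_zero]
          exact mul_nonneg hκ0 (Finset.sum_nonneg fun i _ => abs_nonneg _)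
        · have hr : |g l| / |g ig| ≤ kappa W := ratio_le_kappa (hL g hg).1 hgig h0
          have hr1 : |g l| ≤ kappa W * |g ig| := (div_le_iff₀ (abs_pos.mpr hgig)).mp hr
          have hr2 : |g ig| ≤ ∑ i ∈ I, |g i| :=
            Finset.single_le_sum (f := fun i => |g i|) (fun i _ => abs_nonneg _) higI
          calc |g l| ≤ kappa W * |g ig| := hr1
            _ ≤ kappa W * ∑ i ∈ I, |g i| := mul_le_mul_of_nonneg_left hr2 hκ0
      calc (L.map (fun g => |g l|)).sum
          ≤ (L.map (fun g => kappa W * ∑ i ∈ I, |g i|)).sum := List.sum_le_sum hstep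
        _ = kappa W * (L.map (fun g => ∑ i ∈ I, |g i|)).sum := List.sum_map_mul_left _ _ _
        _ = kappa W * ∑ i ∈ I, (L.map (fun g => |g i|)).sum := by
            rw [list_finset_sum_swap]
        _ = kappa W * D := by
            congr 1
            rw [hD]
            exact Finset.sum_congr rfl fun i _ =>
              (abs_decomp (fun g hg => (hL g hg).2) hsum i).symm
    have hiSup : (⨆ l, |z l|) ≤ kappa W * D := by
      haveI : Nonempty (Fin n) := ⟨i₀⟩
      exact ciSup_le hcoord
    rw [ht, div_le_iff₀ hDpos]
    exact hiSup
  have hbddT : BddAbove T := ⟨kappa W, hub⟩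
  have hmem : ∀ g : Fin n → ℝ, IsElementary W g → ∀ i, g i ≠ 0 →
      (⨆ l, |g l|) / |g i| ∈ T := by
    intro g hel i hi
    refine ⟨(sf g)ᶜ ∪ {i}, ⟨i, by simp⟩, g, hel.1, ⟨i, by simp, hi⟩, ?_, ?_⟩
    · intro z' hz'W hz'I
      have hz'i : z' i = g i := hz'I i (by simp)
      have hz'0 : z' ≠ 0 := fun h0 => hi (by rw [← hz'i, h0]; rfl)
      have hsub : {l | z' l ≠ 0} ⊆ {l | g l ≠ 0} := by
        intro l hl
        by_contra hgl
        simp only [Set.mem_setOf_eq, not_not] at hgl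
        have hlI : l ∈ (sf g)ᶜ ∪ {i} := by
          simp [Finset.mem_union, Finset.mem_compl, mem_sf, hgl]
        have := hz'I l hlI
        exact hl (this.trans hgl)
      obtain ⟨cc, hc0, hcg⟩ := elementary_proportional hel hz'W hz'0 hsub
      have hceq : cc * g i = g i := by
        rw [hcg] at hz'i
        simpa using hz'i
      have hc1 : cc = 1 := mul_right_cancel₀ hi (by rw [one_mul]; exact hceq)
      rw [hcg, hc1, one_smul]
    · congr 1
      rw [Finset.sum_union (Finset.disjoint_singleton_right.mpr
        (Finset.notMem_compl.mpr (mem_sf.mpr hi)))]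
      rw [Finset.sum_singleton, Finset.sum_eq_zero, zero_add]
      intro l hl
      have : g l = 0 := not_not.mp (fun hne => (Finset.mem_compl.mp hl) (mem_sf.mpr hne))
      simp [this]
  apply le_antisymm
  · rw [kappa]
    refine csSup_le ⟨1, Or.inl rfl⟩ ?_
    rintro b (hb | ⟨g, hel, i, j, hi, hj, hb⟩)
    · obtain ⟨z0, hz0W, hz00⟩ := Submodule.exists_mem_ne_zero_of_ne_bot hW
      obtain ⟨g, hel, _⟩ := exists_elem_support_subset hz0W hz00
      obtain ⟨i, himem⟩ := sf_nonempty hel.2.1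
      have hgi := mem_sf.mp himem
      have hib : (1:ℝ) ≤ (⨆ l, |g l|) / |g i| := by
        rw [le_div_iff₀ (abs_pos.mpr hgi), one_mul]
        exact le_ciSup (f := fun l => |g l|) (Set.Finite.bddAbove (Set.finite_range _)) i
      have hb1 : b = 1 := hb
      rw [hb1]
      exact le_trans hib (le_csSup hbddT (hmem g hel i hgi))
    · have hj' : |g j| ≤ ⨆ l, |g l| := le_ciSup (f := fun l => |g l|) (Set.Finite.bddAbove (Set.finite_range _)) j
      have h2 : b ≤ (⨆ l, |g l|) / |g i| := by
        rw [hb]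
        exact (div_le_div_iff_of_pos_right (abs_pos.mpr hi)).mpr hj'
      exact le_trans h2 (le_csSup hbddT (hmem g hel i hi))
  · exact Real.sSup_le hub hκ0
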